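/- For n×n real matrices X, Y with X normal (XXᵀ = XᵀX), ‖[X,Y]‖² ≤ 2‖X‖²‖Y‖², where ‖·‖ denotes the Frobenius norm. -/

import Mathlib

open Matrix Finset

lemma key_aux (n : ℕ) (X Y : Matrix (Fin n) (Fin n) ℝ) (μ : Fin n → ℝ)
    (hμ0 : ∀ i, 0 ≤ μ i)
    (hrow : ∀ i j, ∑ k, X i k * X j k = if i = j then μ i else 0)
    (hcol : ∀ i j, ∑ k, X k i * X k j = if i = j then μ i else 0)
    (hsupp : ∀ i j, μ i ≠ μ j → X i j = 0) :
    ∑ i, ∑ j, ((X * Y - Y * X) i j) ^ 2 ≤ 2 * (∑ i, μ i) * (∑ i, ∑ j, (Y i j) ^ 2) := by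
  classical
  set T : ℝ := ∑ i, μ i with hT
  set V : Finset ℝ := Finset.image μ Finset.univ with hV
  set fib : ℝ → Finset (Fin n) := fun v => Finset.univ.filter (fun i => μ i = v) with hfib
  have hmemfib : ∀ (v : ℝ) (i : Fin n), i ∈ fib v ↔ μ i = v := by
    intro v i; simp [hfib]
  -- restricted row orthogonality
  have rowblock : ∀ (u : ℝ) (k k' : Fin n),
      ∑ i ∈ fib u, X i k * X i k' = if k = k' ∧ μ k = u then μ k else 0 := by
    intro u k k'
    by_cases hk : μ k = u
    · have hext : ∑ i ∈ fib u, X i k * X i k' = ∑ i, X i k * X i k' := by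
        apply Finset.sum_subset (Finset.subset_univ _)
        intro i _ hi
        have hne : μ i ≠ μ k := by
          rw [hk]; simpa [hmemfib] using hi
        rw [hsupp i k hne, zero_mul]
      rw [hext, hcol k k']
      by_cases hkk : k = k'
      · subst hkk; simp [hk]
      · simp [hkk]
    · have : ∀ i ∈ fib u, X i k * X i k' = 0 := by
        intro i hi
        have : μ i ≠ μ k := by
          rw [(hmemfib u i).mp hi]; exact fun h => hk h.symm
        rw [hsupp i k this, zero_mul]
      rw [Finset.sum_eq_zero this]
      simp [hk]
  -- restricted column orthogonality
  have colblock : ∀ (v : ℝ) (k k' : Fin n),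
      ∑ j ∈ fib v, X k j * X k' j = if k = k' ∧ μ k = v then μ k else 0 := by
    intro v k k'
    by_cases hk : μ k = v
    · have hext : ∑ j ∈ fib v, X k j * X k' j = ∑ j, X k j * X k' j := by
        apply Finset.sum_subset (Finset.subset_univ _)
        intro j _ hj
        have hj' : μ j ≠ v := by simpa [hmemfib] using hj
        have hne : μ k ≠ μ j := by rw [hk]; exact fun h => hj' h.symm
        rw [hsupp k j hne, zero_mul]
      rw [hext, hrow k k']
      by_cases hkk : k = k'
      · subst hkk; simp [hk]
      · simp [hkk]
    · have : ∀ j ∈ fib v, X k j * X k' j = 0 := by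
        intro j hj
        have : μ k ≠ μ j := by
          rw [(hmemfib v j).mp hj]; exact hk
        rw [hsupp k j this, zero_mul]
      rw [Finset.sum_eq_zero this]
      simp [hk]
  -- block sums of (X*Y)^2
  have e1 : ∀ (u : ℝ) (j : Fin n),
      ∑ i ∈ fib u, ((X * Y) i j) ^ 2 = u * ∑ k ∈ fib u, (Y k j) ^ 2 := by
    intro u j
    have expand : ∀ i, ((X * Y) i j) ^ 2
        = ∑ k, ∑ k', (X i k * X i k') * (Y k j * Y k' j) := by
      intro i
      rw [Matrix.mul_apply, sq, Finset.sum_mul_sum]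
      exact Finset.sum_congr rfl fun k _ => Finset.sum_congr rfl fun k' _ => by ring
    calc ∑ i ∈ fib u, ((X * Y) i j) ^ 2
        = ∑ i ∈ fib u, ∑ k, ∑ k', (X i k * X i k') * (Y k j * Y k' j) := by
          exact Finset.sum_congr rfl fun i _ => expand i
      _ = ∑ k, ∑ k', (∑ i ∈ fib u, X i k * X i k') * (Y k j * Y k' j) := by
          rw [Finset.sum_comm]
          refine Finset.sum_congr rfl fun k _ => ?_
          rw [Finset.sum_comm]
          refine Finset.sum_congr rfl fun k' _ => ?_
          rw [Finset.sum_mul]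
      _ = ∑ k, ∑ k', (if k = k' ∧ μ k = u then μ k else 0) * (Y k j * Y k' j) := by
          refine Finset.sum_congr rfl fun k _ => Finset.sum_congr rfl fun k' _ => ?_
          rw [rowblock]
      _ = ∑ k, (if μ k = u then μ k * (Y k j)^2 else 0) := by
          refine Finset.sum_congr rfl fun k _ => ?_
          by_cases hk : μ k = u
          · simp only [hk, and_true]
            rw [Finset.sum_eq_single k]
            · simp [sq]
            · intro k' _ hne; simp [Ne.symm hne]
            · simp
          · simp [hk]
      _ = u * ∑ k ∈ fib u, (Y k j) ^ 2 := by
          rw [Finset.mul_sum, Finset.sum_filter]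
          refine Finset.sum_congr rfl fun k _ => ?_
          by_cases hk : μ k = u <;> simp [hk]
  have e2 : ∀ (v : ℝ) (i : Fin n),
      ∑ j ∈ fib v, ((Y * X) i j) ^ 2 = v * ∑ l ∈ fib v, (Y i l) ^ 2 := by
    intro v i
    have expand : ∀ j, ((Y * X) i j) ^ 2
        = ∑ k, ∑ k', (X k j * X k' j) * (Y i k * Y i k') := by
      intro j
      rw [Matrix.mul_apply, sq, Finset.sum_mul_sum]
      exact Finset.sum_congr rfl fun k _ => Finset.sum_congr rfl fun k' _ => by ring
    calc ∑ j ∈ fib v, ((Y * X) i j) ^ 2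
        = ∑ j ∈ fib v, ∑ k, ∑ k', (X k j * X k' j) * (Y i k * Y i k') := by
          exact Finset.sum_congr rfl fun j _ => expand j
      _ = ∑ k, ∑ k', (∑ j ∈ fib v, X k j * X k' j) * (Y i k * Y i k') := by
          rw [Finset.sum_comm]
          refine Finset.sum_congr rfl fun k _ => ?_
          rw [Finset.sum_comm]
          refine Finset.sum_congr rfl fun k' _ => ?_
          rw [Finset.sum_mul]
      _ = ∑ k, ∑ k', (if k = k' ∧ μ k = v then μ k else 0) * (Y i k * Y i k') := by
          refine Finset.sum_congr rfl fun k _ => Finset.sum_congr rfl fun k' _ => ?_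
          rw [colblock]
      _ = ∑ k, (if μ k = v then μ k * (Y i k)^2 else 0) := by
          refine Finset.sum_congr rfl fun k _ => ?_
          by_cases hk : μ k = v
          · simp only [hk, and_true]
            rw [Finset.sum_eq_single k]
            · simp [sq]
            · intro k' _ hne; simp [Ne.symm hne]
            · simp
          · simp [hk]
      _ = v * ∑ l ∈ fib v, (Y i l) ^ 2 := by
          rw [Finset.mul_sum, Finset.sum_filter]
          refine Finset.sum_congr rfl fun k _ => ?_
          by_cases hk : μ k = v <;> simp [hk]
  -- Cauchy-Schwarz on blocks
  have hCS : ∀ (u v : ℝ),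
      (∑ i ∈ fib u, ∑ j ∈ fib v, (X * Y) i j * (Y * X) i j) ^ 2 ≤
        (∑ i ∈ fib u, ∑ j ∈ fib v, ((X * Y) i j) ^ 2) *
          (∑ i ∈ fib u, ∑ j ∈ fib v, ((Y * X) i j) ^ 2) := by
    intro u v
    have h := Finset.sum_mul_sq_le_sq_mul_sq ((fib u) ×ˢ (fib v))
      (fun p => (X * Y) p.1 p.2) (fun p => (Y * X) p.1 p.2)
    simpa [Finset.sum_product] using h
  -- block sums identities
  have hA : ∀ (u v : ℝ),
      ∑ i ∈ fib u, ∑ j ∈ fib v, ((X * Y) i j) ^ 2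
        = u * ∑ i ∈ fib u, ∑ j ∈ fib v, (Y i j) ^ 2 := by
    intro u v
    rw [Finset.sum_comm]
    calc ∑ j ∈ fib v, ∑ i ∈ fib u, ((X * Y) i j) ^ 2
        = ∑ j ∈ fib v, u * ∑ k ∈ fib u, (Y k j) ^ 2 :=
          Finset.sum_congr rfl fun j _ => e1 u j
      _ = u * ∑ j ∈ fib v, ∑ k ∈ fib u, (Y k j) ^ 2 := by rw [Finset.mul_sum]
      _ = u * ∑ i ∈ fib u, ∑ j ∈ fib v, (Y i j) ^ 2 := by rw [Finset.sum_comm]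
  have hB : ∀ (u v : ℝ),
      ∑ i ∈ fib u, ∑ j ∈ fib v, ((Y * X) i j) ^ 2
        = v * ∑ i ∈ fib u, ∑ j ∈ fib v, (Y i j) ^ 2 := by
    intro u v
    calc ∑ i ∈ fib u, ∑ j ∈ fib v, ((Y * X) i j) ^ 2
        = ∑ i ∈ fib u, v * ∑ l ∈ fib v, (Y i l) ^ 2 :=
          Finset.sum_congr rfl fun i _ => e2 v i
      _ = v * ∑ i ∈ fib u, ∑ j ∈ fib v, (Y i j) ^ 2 := by rw [Finset.mul_sum]
  -- sign of diagonal blocks with multiplicity one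
  have hsign : ∀ (u : ℝ), (fib u).card = 1 →
      0 ≤ ∑ i ∈ fib u, ∑ j ∈ fib u, (X * Y) i j * (Y * X) i j := by
    intro u hc
    obtain ⟨i0, hi0⟩ := Finset.card_eq_one.mp hc
    have hμi0 : μ i0 = u := by
      have : i0 ∈ fib u := by rw [hi0]; exact Finset.mem_singleton_self i0
      exact (hmemfib u i0).mp this
    have hXzero : ∀ k, k ≠ i0 → X i0 k = 0 ∧ X k i0 = 0 := by
      intro k hk
      by_cases hμk : μ k = u
      · exfalso
        have : k ∈ fib u := (hmemfib u k).mpr hμk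
        rw [hi0] at this
        exact hk (Finset.mem_singleton.mp this)
      · constructor
        · exact hsupp i0 k (by rw [hμi0]; exact fun h => hμk h.symm)
        · exact hsupp k i0 (by rw [hμi0]; exact hμk)
    have hXY : (X * Y) i0 i0 = X i0 i0 * Y i0 i0 := by
      rw [Matrix.mul_apply]
      apply Finset.sum_eq_single i0
      · intro k _ hk; rw [(hXzero k hk).1, zero_mul]
      · simp
    have hYX : (Y * X) i0 i0 = Y i0 i0 * X i0 i0 := by
      rw [Matrix.mul_apply]
      apply Finset.sum_eq_single i0
      · intro k _ hk; rw [(hXzero k hk).2, mul_zero]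
      · simp
    rw [hi0]
    simp only [Finset.sum_singleton]
    rw [hXY, hYX]
    nlinarith [sq_nonneg (X i0 i0 * Y i0 i0)]
  -- trace bounds
  have hcardmul : ∀ (u : ℝ), ∑ i ∈ fib u, μ i = ((fib u).card : ℝ) * u := by
    intro u
    rw [Finset.sum_congr rfl (fun i hi => (hmemfib u i).mp hi), Finset.sum_const,
      nsmul_eq_mul]
  have hfibsubT : ∀ (u : ℝ), ((fib u).card : ℝ) * u ≤ T := by
    intro u
    rw [← hcardmul u, hT]
    exact Finset.sum_le_sum_of_subset_of_nonneg (Finset.subset_univ _)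
      (fun i _ _ => hμ0 i)
  have hmemV : ∀ u ∈ V, ∃ i, μ i = u := by
    intro u hu
    simpa [hV] using hu
  have hu0V : ∀ u ∈ V, 0 ≤ u := by
    intro u hu
    obtain ⟨i, hi⟩ := hmemV u hu
    rw [← hi]; exact hμ0 i
  have hcard1 : ∀ u ∈ V, 1 ≤ (fib u).card := by
    intro u hu
    obtain ⟨i, hi⟩ := hmemV u hu
    exact Finset.card_pos.mpr ⟨i, (hmemfib u i).mpr hi⟩
  have huleT : ∀ u ∈ V, u ≤ T := by
    intro u hu
    have := hfibsubT u
    have h1 : (1 : ℝ) ≤ ((fib u).card : ℝ) := by exact_mod_cast hcard1 u hu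
    nlinarith [hu0V u hu]
  have huvT : ∀ u ∈ V, ∀ v ∈ V, u ≠ v → u + v ≤ T := by
    intro u hu v hv hne
    obtain ⟨i, hi⟩ := hmemV u hu
    obtain ⟨j, hj⟩ := hmemV v hv
    have hij : i ≠ j := by
      intro h; apply hne; rw [← hi, ← hj, h]
    have hsub : {i, j} ⊆ (Finset.univ : Finset (Fin n)) := Finset.subset_univ _
    have := Finset.sum_le_sum_of_subset_of_nonneg hsub
      (fun k _ _ => hμ0 k)
    rw [Finset.sum_insert (by simpa using hij), Finset.sum_singleton, hi, hj] at this
    rw [hT]; exact this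
  -- fiberwise splitting of double sums
  have split1 : ∀ (G : Fin n → ℝ), ∑ i, G i = ∑ u ∈ V, ∑ i ∈ fib u, G i := by
    intro G
    rw [← Finset.sum_fiberwise_of_maps_to
      (fun i _ => Finset.mem_image_of_mem μ (Finset.mem_univ i)) G]
  have split : ∀ (F : Fin n → Fin n → ℝ),
      ∑ i, ∑ j, F i j = ∑ u ∈ V, ∑ v ∈ V, ∑ i ∈ fib u, ∑ j ∈ fib v, F i j := by
    intro F
    rw [split1 (fun i => ∑ j, F i j)]
    refine Finset.sum_congr rfl fun u _ => ?_
    calc ∑ i ∈ fib u, ∑ j, F i j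
        = ∑ i ∈ fib u, ∑ v ∈ V, ∑ j ∈ fib v, F i j :=
          Finset.sum_congr rfl fun i _ => split1 (fun j => F i j)
      _ = ∑ v ∈ V, ∑ i ∈ fib u, ∑ j ∈ fib v, F i j := Finset.sum_comm
  -- expand commutator squares blockwise
  have hblock : ∀ (s t : Finset (Fin n)),
      ∑ i ∈ s, ∑ j ∈ t, ((X * Y - Y * X) i j) ^ 2
        = (∑ i ∈ s, ∑ j ∈ t, ((X * Y) i j) ^ 2)
          - 2 * (∑ i ∈ s, ∑ j ∈ t, (X * Y) i j * (Y * X) i j)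
          + (∑ i ∈ s, ∑ j ∈ t, ((Y * X) i j) ^ 2) := by
    intro s t
    have inner : ∀ i, ∑ j ∈ t, ((X * Y - Y * X) i j) ^ 2
        = (∑ j ∈ t, ((X * Y) i j) ^ 2)
          - 2 * (∑ j ∈ t, (X * Y) i j * (Y * X) i j)
          + (∑ j ∈ t, ((Y * X) i j) ^ 2) := by
      intro i
      rw [Finset.mul_sum, ← Finset.sum_sub_distrib, ← Finset.sum_add_distrib]
      exact Finset.sum_congr rfl fun j _ => by rw [Matrix.sub_apply]; ring
    rw [Finset.sum_congr rfl fun i _ => inner i]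
    rw [Finset.mul_sum, ← Finset.sum_sub_distrib, ← Finset.sum_add_distrib]
  -- assemble
  have hR : 2 * T * (∑ i, ∑ j, (Y i j) ^ 2)
      = ∑ u ∈ V, ∑ v ∈ V, 2 * T * (∑ i ∈ fib u, ∑ j ∈ fib v, (Y i j) ^ 2) := by
    rw [split (fun i j => (Y i j) ^ 2), Finset.mul_sum]
    exact Finset.sum_congr rfl fun u _ => by rw [Finset.mul_sum]
  rw [split (fun i j => ((X * Y - Y * X) i j) ^ 2), hR]
  apply Finset.sum_le_sum
  intro u hu
  apply Finset.sum_le_sum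
  intro v hv
  set N : ℝ := ∑ i ∈ fib u, ∑ j ∈ fib v, (Y i j) ^ 2 with hN
  set c : ℝ := ∑ i ∈ fib u, ∑ j ∈ fib v, (X * Y) i j * (Y * X) i j with hc
  have hN0 : 0 ≤ N := by
    rw [hN]
    apply Finset.sum_nonneg; intro i _
    apply Finset.sum_nonneg; intro j _
    exact sq_nonneg _
  have hu0 : 0 ≤ u := hu0V u hu
  have hv0 : 0 ≤ v := hu0V v hv
  have hcs : c ^ 2 ≤ (u * N) * (v * N) := by
    rw [hc, hN]
    calc (∑ i ∈ fib u, ∑ j ∈ fib v, (X * Y) i j * (Y * X) i j) ^ 2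
        ≤ (∑ i ∈ fib u, ∑ j ∈ fib v, ((X * Y) i j) ^ 2) *
            (∑ i ∈ fib u, ∑ j ∈ fib v, ((Y * X) i j) ^ 2) := hCS u v
      _ = (u * ∑ i ∈ fib u, ∑ j ∈ fib v, (Y i j) ^ 2) *
            (v * ∑ i ∈ fib u, ∑ j ∈ fib v, (Y i j) ^ 2) := by rw [hA, hB]
  rw [hblock (fib u) (fib v), hA, hB, ← hN, ← hc]
  by_cases hne : u = v
  · subst hne
    by_cases hcard : (fib u).card = 1
    · have hcge : 0 ≤ c := by rw [hc]; exact hsign u hcard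
      have huT : u ≤ T := huleT u hu
      have : u * N ≤ T * N := mul_le_mul_of_nonneg_right huT hN0
      linarith
    · have h2 : 2 ≤ (fib u).card := by
        have h1 := hcard1 u hu
        omega
      have h2' : (2 : ℝ) ≤ ((fib u).card : ℝ) := by exact_mod_cast h2
      have h2uT : 2 * u ≤ T := by
        have := hfibsubT u
        nlinarith
      have hcneg : -2 * c ≤ 2 * (u * N) := by
        nlinarith [hcs, mul_nonneg hu0 hN0]
      have : 2 * u * N ≤ T * N := by
        exact mul_le_mul_of_nonneg_right h2uT hN0
      nlinarith
  · have huv : u + v ≤ T := huvT u hu v hv hne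
    have hcneg : -2 * c ≤ (u + v) * N := by
      nlinarith [hcs, sq_nonneg ((u - v) * N), mul_nonneg hu0 hN0, mul_nonneg hv0 hN0,
        mul_nonneg (add_nonneg hu0 hv0) hN0]
    have : (u + v) * N ≤ T * N := mul_le_mul_of_nonneg_right huv hN0
    nlinarith

lemma frob_eq_trace (n : ℕ) (A : Matrix (Fin n) (Fin n) ℝ) :
    ∑ i, ∑ j, (A i j) ^ 2 = Matrix.trace (Aᵀ * A) := by
  unfold Matrix.trace
  simp only [Matrix.diag, Matrix.mul_apply, Matrix.transpose_apply]
  rw [Finset.sum_comm]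
  exact Finset.sum_congr rfl fun i _ => Finset.sum_congr rfl fun j _ => sq (A j i)

theorem stmt_19 (n : ℕ) (X Y : Matrix (Fin n) (Fin n) ℝ)
    (hnormal : X * Xᵀ = Xᵀ * X) :
    ∑ i, ∑ j, ((X * Y - Y * X) i j) ^ 2 ≤
      2 * (∑ i, ∑ j, (X i j) ^ 2) * (∑ i, ∑ j, (Y i j) ^ 2) := by
  classical
  set S : Matrix (Fin n) (Fin n) ℝ := Xᵀ * X with hSdef
  have hSps : S.PosSemidef := by
    have := Matrix.posSemidef_conjTranspose_mul_self X
    simpa [Matrix.conjTranspose_eq_transpose_of_trivial] using this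
  have hherm : S.IsHermitian := hSps.1
  set μ : Fin n → ℝ := hherm.eigenvalues with hμdef
  have hμ0 : ∀ i, 0 ≤ μ i := fun i => hSps.eigenvalues_nonneg i
  set U : Matrix (Fin n) (Fin n) ℝ := (hherm.eigenvectorUnitary : Matrix (Fin n) (Fin n) ℝ) with hUdef
  have hstar : star U = Uᵀ := by
    ext i j; simp [Matrix.star_apply]
  have hU1 : Uᵀ * U = 1 := by
    rw [← hstar]; exact Matrix.mem_unitaryGroup_iff'.mp hherm.eigenvectorUnitary.2
  have hU2 : U * Uᵀ = 1 := by
    rw [← hstar]; exact Matrix.mem_unitaryGroup_iff.mp hherm.eigenvectorUnitary.2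
  have hdiag : Uᵀ * S * U = Matrix.diagonal μ := by
    rw [← hstar]
    simpa [Unitary.conjStarAlgAut_star_apply] using hherm.conjStarAlgAut_star_eigenvectorUnitary
  have hconjmul : ∀ A B : Matrix (Fin n) (Fin n) ℝ,
      (Uᵀ * A * U) * (Uᵀ * B * U) = Uᵀ * (A * B) * U := by
    intro A B
    simp only [Matrix.mul_assoc]
    rw [← Matrix.mul_assoc U Uᵀ, hU2, Matrix.one_mul]
  have htr : ∀ A : Matrix (Fin n) (Fin n) ℝ, Matrix.trace (Uᵀ * A * U) = Matrix.trace A := by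
    intro A
    rw [Matrix.trace_mul_cycle, hU2, Matrix.one_mul]
  have htrans : ∀ A : Matrix (Fin n) (Fin n) ℝ, (Uᵀ * A * U)ᵀ = Uᵀ * Aᵀ * U := by
    intro A
    rw [Matrix.transpose_mul, Matrix.transpose_mul, Matrix.transpose_transpose,
      Matrix.mul_assoc]
  have hfrob_conj : ∀ A : Matrix (Fin n) (Fin n) ℝ,
      ∑ i, ∑ j, ((Uᵀ * A * U) i j) ^ 2 = ∑ i, ∑ j, (A i j) ^ 2 := by
    intro A
    rw [frob_eq_trace, frob_eq_trace]
    rw [htrans, hconjmul, htr]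
  set X' : Matrix (Fin n) (Fin n) ℝ := Uᵀ * X * U with hX'def
  set Y' : Matrix (Fin n) (Fin n) ℝ := Uᵀ * Y * U with hY'def
  have hX'1 : X'ᵀ * X' = Matrix.diagonal μ := by
    rw [hX'def, htrans, hconjmul, ← hSdef, hdiag]
  have hX'2 : X' * X'ᵀ = Matrix.diagonal μ := by
    rw [hX'def, htrans, hconjmul, hnormal, hdiag]
  have hrow : ∀ i j, ∑ k, X' i k * X' j k = if i = j then μ i else 0 := by
    intro i j
    have h := congrFun (congrFun hX'2 i) j
    simpa [Matrix.mul_apply, Matrix.transpose_apply, Matrix.diagonal_apply] using h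
  have hcol : ∀ i j, ∑ k, X' k i * X' k j = if i = j then μ i else 0 := by
    intro i j
    have h := congrFun (congrFun hX'1 i) j
    simpa [Matrix.mul_apply, Matrix.transpose_apply, Matrix.diagonal_apply] using h
  have hcomm : X' * Matrix.diagonal μ = Matrix.diagonal μ * X' := by
    conv_lhs => rw [← hX'1]
    conv_rhs => rw [← hX'2]
    exact (Matrix.mul_assoc _ _ _).symm
  have hsupp : ∀ i j, μ i ≠ μ j → X' i j = 0 := by
    intro i j hne
    have h1 : (X' * Matrix.diagonal μ) i j = (Matrix.diagonal μ * X') i j := by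
      rw [hcomm]
    rw [Matrix.mul_diagonal, Matrix.diagonal_mul] at h1
    have h2 : X' i j * (μ j - μ i) = 0 := by ring_nf; linear_combination h1
    rcases mul_eq_zero.mp h2 with h | h
    · exact h
    · exact absurd (by linarith : μ i = μ j) hne
  have hcommconj : Uᵀ * (X * Y - Y * X) * U = X' * Y' - Y' * X' := by
    rw [Matrix.mul_sub, Matrix.sub_mul, hX'def, hY'def, hconjmul, hconjmul]
  have hμsum : ∑ i, μ i = ∑ i, ∑ j, (X i j) ^ 2 := by
    calc ∑ i, μ i = Matrix.trace (Matrix.diagonal μ) := (Matrix.trace_diagonal μ).symm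
      _ = Matrix.trace (Uᵀ * S * U) := by rw [hdiag]
      _ = Matrix.trace S := htr S
      _ = ∑ i, ∑ j, (X i j) ^ 2 := by rw [frob_eq_trace, hSdef]
  calc ∑ i, ∑ j, ((X * Y - Y * X) i j) ^ 2
      = ∑ i, ∑ j, ((X' * Y' - Y' * X') i j) ^ 2 := by
        rw [← hcommconj, hfrob_conj]
    _ ≤ 2 * (∑ i, μ i) * (∑ i, ∑ j, (Y' i j) ^ 2) :=
        key_aux n X' Y' μ hμ0 hrow hcol hsupp
    _ = 2 * (∑ i, ∑ j, (X i j) ^ 2) * (∑ i, ∑ j, (Y i j) ^ 2) := by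
        rw [hμsum, hY'def, hfrob_conj]
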